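/- Let Q : ℝ^{2×2}_sym → ℝ be a quadratic form, represented by a tensor C ∈ ℝ^{2×2×2×2} via Q(A) = Σ_{i,j,k,l} C_{ijkl} A_{ij} A_{kl}. Let ψ : ω → ℝ³ be a C² isometric immersion with unit normal n[ψ]. Then at every point, Q(D²ψ · n[ψ]) = Σ_{m=1}^{3} Q(D²ψ_m), where D²ψ · n[ψ] denotes the 2×2 matrix with entries ∂ᵢ∂ⱼψ · n[ψ], and ψ_m are the components of ψ. -/

import Mathlib

open Matrix

/-- Partial derivative `∂ᵢψ(x)` of a map `ψ : ℝ² → ℝ³`. -/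
noncomputable def pd (ψ : (Fin 2 → ℝ) → (Fin 3 → ℝ)) (i : Fin 2) (x : Fin 2 → ℝ) : Fin 3 → ℝ :=
  fderiv ℝ ψ x (Pi.single i 1)

/-- Second partial derivative `∂ᵢ∂ⱼψ(x)`. -/
noncomputable def pd2 (ψ : (Fin 2 → ℝ) → (Fin 3 → ℝ)) (i j : Fin 2) (x : Fin 2 → ℝ) : Fin 3 → ℝ :=
  fderiv ℝ (pd ψ j) x (Pi.single i 1)

/-- Unit normal `n[ψ] = ∂₁ψ × ∂₂ψ`. -/
noncomputable def nrm (ψ : (Fin 2 → ℝ) → (Fin 3 → ℝ)) (x : Fin 2 → ℝ) : Fin 3 → ℝ :=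
  crossProduct (pd ψ 0 x) (pd ψ 1 x)

/-- A quadratic form on 2×2 matrices given by a 4-tensor `C`:
`Q(A) = Σ_{i,j,k,l} C_{ijkl} A_{ij} A_{kl}`. -/
def quadForm (C : Fin 2 → Fin 2 → Fin 2 → Fin 2 → ℝ)
    (A : Matrix (Fin 2) (Fin 2) ℝ) : ℝ :=
  ∑ i, ∑ j, ∑ k, ∑ l, C i j k l * A i j * A k l

open scoped Matrix in
lemma triple_cross (u a b : Fin 3 → ℝ) :
    u ⨯₃ (a ⨯₃ b) = (u ⬝ᵥ b) • a - (u ⬝ᵥ a) • b := by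
  funext m
  simp [cross_apply, dotProduct, Fin.sum_univ_three]
  fin_cases m <;> simp <;> ring

theorem stmt2 (ω : Set (Fin 2 → ℝ)) (hω : IsOpen ω)
    (C : Fin 2 → Fin 2 → Fin 2 → Fin 2 → ℝ)
    (ψ : (Fin 2 → ℝ) → (Fin 3 → ℝ)) (hψ : ContDiffOn ℝ 2 ψ ω)
    (hiso : ∀ x ∈ ω, ∀ i j : Fin 2,
      pd ψ i x ⬝ᵥ pd ψ j x = if i = j then 1 else 0) :
    ∀ x ∈ ω,
      quadForm C (Matrix.of fun i j => pd2 ψ i j x ⬝ᵥ nrm ψ x) =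
        ∑ m : Fin 3, quadForm C (Matrix.of fun i j => pd2 ψ i j x m) := by
  intro x hx
  have hx2 : ∀ y ∈ ω, ContDiffAt ℝ 2 ψ y := fun y hy => hψ.contDiffAt (hω.mem_nhds hy)
  have hdpd : ∀ (i : Fin 2), ∀ y ∈ ω, DifferentiableAt ℝ (pd ψ i) y := by
    intro i y hy
    have h1 : ContDiffAt ℝ 1 (fderiv ℝ ψ) y := (hx2 y hy).fderiv_right (le_refl 2)
    exact (h1.differentiableAt one_ne_zero).clm_apply (differentiableAt_const _)
  -- symmetry of second derivatives
  have hsymm : ∀ i j : Fin 2, pd2 ψ i j x = pd2 ψ j i x := by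
    have hs : IsSymmSndFDerivAt ℝ ψ x := (hx2 x hx).isSymmSndFDerivAt (by simp)
    have hdf : DifferentiableAt ℝ (fderiv ℝ ψ) x :=
      ((((hx2 x hx).fderiv_right (le_refl 2) : ContDiffAt ℝ 1 (fderiv ℝ ψ) x)).differentiableAt one_ne_zero)
    have e : ∀ a b : Fin 2, pd2 ψ a b x
        = fderiv ℝ (fderiv ℝ ψ) x (Pi.single a 1) (Pi.single b 1) := by
      intro a b
      show fderiv ℝ (fun y => fderiv ℝ ψ y (Pi.single b 1)) x (Pi.single a 1) = _
      rw [fderiv_clm_apply hdf (differentiableAt_const _)]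
      simp
    intro i j
    rw [e i j, e j i, hs.eq]
  -- differentiated isometry relation
  have hD : ∀ k i j : Fin 2,
      pd2 ψ k i x ⬝ᵥ pd ψ j x + pd2 ψ k j x ⬝ᵥ pd ψ i x = 0 := by
    intro k i j
    have hi := (hdpd i x hx).hasFDerivAt
    have hj := (hdpd j x hx).hasFDerivAt
    have hcomp : ∀ (m : Fin 3) (f : (Fin 2 → ℝ) → Fin 3 → ℝ)
        (D : (Fin 2 → ℝ) →L[ℝ] (Fin 3 → ℝ)), HasFDerivAt f D x →
        HasFDerivAt (fun y => f y m) ((ContinuousLinearMap.proj m).comp D) x :=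
      fun m f D h => by
        exact (ContinuousLinearMap.proj m).hasFDerivAt.comp x h
    have hg : HasFDerivAt (fun y => ∑ m : Fin 3, pd ψ i y m * pd ψ j y m)
        (∑ m : Fin 3, (pd ψ i x m •
            (ContinuousLinearMap.proj m).comp (fderiv ℝ (pd ψ j) x)
          + pd ψ j x m • (ContinuousLinearMap.proj m).comp (fderiv ℝ (pd ψ i) x))) x :=
      HasFDerivAt.fun_sum fun m _ =>
        (hcomp m _ _ hi).mul (hcomp m _ _ hj)
    have heq : (fun y => ∑ m : Fin 3, pd ψ i y m * pd ψ j y m)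
        =ᶠ[nhds x] fun _ => (if i = j then (1:ℝ) else 0) := by
      filter_upwards [hω.mem_nhds hx] with y hy
      simpa [dotProduct] using hiso y hy i j
    have h0 : HasFDerivAt (fun _ : Fin 2 → ℝ => (if i = j then (1:ℝ) else 0)) _ x :=
      hg.congr_of_eventuallyEq heq.symm
    have hL0 := (hasFDerivAt_const (if i = j then (1:ℝ) else 0) x).unique h0
    have h2 := congrArg (fun L : (Fin 2 → ℝ) →L[ℝ] ℝ => L (Pi.single k 1)) hL0
    simp only [ContinuousLinearMap.zero_apply, ContinuousLinearMap.sum_apply,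
      ContinuousLinearMap.add_apply, ContinuousLinearMap.smul_apply,
      ContinuousLinearMap.comp_apply, ContinuousLinearMap.proj_apply, smul_eq_mul] at h2
    have e2 : ∀ a : Fin 2, (fderiv ℝ (pd ψ a) x) (Pi.single k 1) = pd2 ψ k a x := fun a => rfl
    rw [e2 i, e2 j] at h2
    simp only [dotProduct]
    calc ∑ m : Fin 3, pd2 ψ k i x m * pd ψ j x m + ∑ m : Fin 3, pd2 ψ k j x m * pd ψ i x m
        = ∑ m : Fin 3, (pd ψ i x m * pd2 ψ k j x m + pd ψ j x m * pd2 ψ k i x m) := by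
          rw [← Finset.sum_add_distrib]
          exact Finset.sum_congr rfl fun m _ => by ring
      _ = 0 := h2.symm
  -- tangential second derivatives vanish
  have hT : ∀ i j k : Fin 2, pd2 ψ i j x ⬝ᵥ pd ψ k x = 0 := by
    intro i j k
    have c1 := hD i j k
    have c2 := hD k i j
    have c3 := hD j k i
    rw [hsymm i k] at c1
    rw [hsymm k j] at c2
    rw [hsymm j i] at c3
    linarith
  -- normal facts
  set n := nrm ψ x with hn
  have hnn : n ⬝ᵥ n = 1 := by
    have := cross_dot_cross (pd ψ 0 x) (pd ψ 1 x) (pd ψ 0 x) (pd ψ 1 x)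
    rw [hn]
    show (crossProduct (pd ψ 0 x) (pd ψ 1 x)) ⬝ᵥ (crossProduct (pd ψ 0 x) (pd ψ 1 x)) = 1
    rw [this, hiso x hx 0 0, hiso x hx 1 1, hiso x hx 0 1]
    norm_num
  have hucross : ∀ i j : Fin 2, crossProduct (pd2 ψ i j x) n = 0 := by
    intro i j
    rw [hn]
    show crossProduct (pd2 ψ i j x) (crossProduct (pd ψ 0 x) (pd ψ 1 x)) = 0
    rw [show (crossProduct (pd2 ψ i j x)) ((crossProduct (pd ψ 0 x)) (pd ψ 1 x))
        = (pd2 ψ i j x ⬝ᵥ pd ψ 1 x) • pd ψ 0 x - (pd2 ψ i j x ⬝ᵥ pd ψ 0 x) • pd ψ 1 x from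
      triple_cross _ _ _]
    rw [hT i j 0, hT i j 1]
    simp
  have key : ∀ i j k l : Fin 2, pd2 ψ i j x ⬝ᵥ pd2 ψ k l x
      = (pd2 ψ i j x ⬝ᵥ n) * (pd2 ψ k l x ⬝ᵥ n) := by
    intro i j k l
    have := cross_dot_cross (pd2 ψ i j x) n (pd2 ψ k l x) n
    rw [show (crossProduct (pd2 ψ i j x)) n = 0 from hucross i j,
      show (crossProduct (pd2 ψ k l x)) n = 0 from hucross k l] at this
    rw [dotProduct_comm n (pd2 ψ k l x)] at this
    simp only [zero_dotProduct, hnn, mul_one] at this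
    linarith
  -- final assembly
  have swap : ∀ (f : Fin 2 → Fin 2 → Fin 2 → Fin 2 → Fin 3 → ℝ),
      ∑ m : Fin 3, ∑ i, ∑ j, ∑ k, ∑ l, f i j k l m
        = ∑ i, ∑ j, ∑ k, ∑ l, ∑ m : Fin 3, f i j k l m := by
    intro f
    rw [Finset.sum_comm]
    refine Finset.sum_congr rfl fun i _ => ?_
    rw [Finset.sum_comm]
    refine Finset.sum_congr rfl fun j _ => ?_
    rw [Finset.sum_comm]
    refine Finset.sum_congr rfl fun k _ => ?_
    rw [Finset.sum_comm]
  simp only [quadForm, Matrix.of_apply]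
  rw [swap]
  refine Finset.sum_congr rfl fun i _ => Finset.sum_congr rfl fun j _ =>
    Finset.sum_congr rfl fun k _ => Finset.sum_congr rfl fun l _ => ?_
  have : ∑ m : Fin 3, C i j k l * pd2 ψ i j x m * pd2 ψ k l x m
      = C i j k l * (pd2 ψ i j x ⬝ᵥ pd2 ψ k l x) := by
    simp [dotProduct, Finset.mul_sum, mul_assoc]
  rw [this, key i j k l]
  ring
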